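/- Suppose n = 2m with m ≥ 1. Then, with N the μ̃_{2m} × μ̃_{2m} regular nilpotent matrix, one has ∏_{k=1}^{m} ( ∑_{j=0}^{a_{2k−1}−1} N^{j·d_{2k−2}} ) = χ_{2m}; equivalently, φ_{2m}(N) · ∏_{k=1}^{m} ( ∑_{j=0}^{a_{2k−1}−1} N^{j·d_{2k−2}} ) = 𝟏. -/

import Mathlib

open Finset Matrix Polynomial FreeAbelianGroup

/-- `d k = a 1 * a 2 * ⋯ * a k`, with `d 0 = 1`. -/
def chainD (a : ℕ → ℕ) (k : ℕ) : ℕ := ∏ i ∈ Finset.Icc 1 k, a i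

/-- `μ̃ 0 = 1`, `μ̃ k = d k - μ̃ (k-1)`. -/
def chainMu (a : ℕ → ℕ) : ℕ → ℤ
  | 0 => 1
  | k + 1 => (chainD a (k + 1) : ℤ) - chainMu a k

/-- `φ_n(t) = ∏_{i=0}^{n} (1 - t^{d_i})^{(-1)^{n-i}}` as a rational function over `ℚ`. -/
noncomputable def chainPhi (a : ℕ → ℕ) (n : ℕ) : RatFunc ℚ :=
  ∏ i ∈ Finset.range (n + 1),
    ((1 : RatFunc ℚ) - RatFunc.X ^ (chainD a i)) ^ ((-1 : ℤ) ^ (n - i))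

/-- the regular nilpotent `μ × μ` matrix -/
def nilpN (μ : ℕ) : Matrix (Fin μ) (Fin μ) ℚ :=
  Matrix.of fun i j => if (j : ℕ) = (i : ℕ) + 1 then 1 else 0

/-- `χ = ∑_{i=0}^{μ-1} c_i N^i` -/
noncomputable def chiMat (μ : ℕ) (c : ℕ → ℚ) : Matrix (Fin μ) (Fin μ) ℚ :=
  ∑ i ∈ Finset.range μ, c i • (nilpN μ) ^ i

/-- the companion-type matrix `M₁`: `(M₁)_{i,1} = -c'_i`, `(M₁)_{i,i+1} = 1` (1-based). -/
def M1mat (μ : ℕ) (c' : ℕ → ℚ) : Matrix (Fin μ) (Fin μ) ℚ :=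
  Matrix.of fun i j =>
    (if (j : ℕ) = 0 then -c' ((i : ℕ) + 1) else 0) +
    (if (j : ℕ) = (i : ℕ) + 1 then 1 else 0)

/-! ### Auxiliary lemmas -/

lemma nilpN_pow (μ k : ℕ) :
    (nilpN μ) ^ k
      = Matrix.of (fun i j => if (j : ℕ) = (i : ℕ) + k then 1 else 0 : Fin μ → Fin μ → ℚ) := by
  induction k with
  | zero =>
    ext i j
    simp [Matrix.one_apply, eq_comm, Fin.ext_iff]
  | succ k ih =>
    rw [pow_succ, ih]
    ext i j
    simp only [Matrix.mul_apply, Matrix.of_apply, nilpN]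
    rcases lt_or_ge ((i : ℕ) + k) μ with h | h
    · rw [Finset.sum_eq_single (⟨(i:ℕ) + k, h⟩ : Fin μ)]
      · simp [add_assoc]
      · intro b _ hb
        have hb' : ¬ ((b : ℕ) = (i : ℕ) + k) := fun hbe => hb (Fin.ext hbe)
        simp [hb']
      · simp
    · have h1 : ∀ b : Fin μ, ¬ ((b : ℕ) = (i : ℕ) + k) := fun b hb => absurd (hb ▸ b.2) (not_lt.2 h)
      have h2 : ¬ ((j : ℕ) = (i : ℕ) + (k + 1)) := by
        intro hj; have := j.2; omega
      simp [h1, h2]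

lemma nilpN_pow_eq_zero (μ k : ℕ) (hk : μ ≤ k) : (nilpN μ) ^ k = 0 := by
  rw [nilpN_pow]
  ext i j
  have := j.2
  have : ¬ ((j : ℕ) = (i : ℕ) + k) := by omega
  simp [this]

lemma chainD_zero (a : ℕ → ℕ) : chainD a 0 = 1 := by simp [chainD]

lemma chainD_succ (a : ℕ → ℕ) (k : ℕ) : chainD a (k + 1) = chainD a k * a (k + 1) := by
  simp [chainD, Finset.prod_Icc_succ_top (Nat.one_le_iff_ne_zero.mpr (Nat.succ_ne_zero k))]

lemma chainD_pos (a : ℕ → ℕ) (k : ℕ) (h : ∀ i, 1 ≤ i → i ≤ k → 1 ≤ a i) : 1 ≤ chainD a k := by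
  induction k with
  | zero => simp [chainD_zero]
  | succ k ih =>
    rw [chainD_succ]
    exact Nat.one_le_iff_ne_zero.mpr (Nat.mul_ne_zero
      (Nat.one_le_iff_ne_zero.mp (ih fun i h1 h2 => h i h1 (h2.trans (Nat.le_succ k))))
      (Nat.one_le_iff_ne_zero.mp (h (k+1) (Nat.succ_le_succ (Nat.zero_le k)) le_rfl)))

lemma chainMu_bounds (a : ℕ → ℕ) (k : ℕ) (h : ∀ i, 1 ≤ i → i ≤ k → 2 ≤ a i) :
    1 ≤ chainMu a k ∧ chainMu a k ≤ (chainD a k : ℤ) := by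
  induction k with
  | zero => simp [chainMu, chainD_zero]
  | succ k ih =>
    have h' : ∀ i, 1 ≤ i → i ≤ k → 2 ≤ a i := fun i h1 h2 => h i h1 (h2.trans (Nat.le_succ k))
    obtain ⟨ih1, ih2⟩ := ih h'
    have hd : 1 ≤ chainD a k := chainD_pos a k (fun i h1 h2 => le_trans one_le_two (h' i h1 h2))
    have ha : 2 ≤ a (k+1) := h (k+1) (Nat.succ_le_succ (Nat.zero_le k)) le_rfl
    have hds : chainD a (k+1) = chainD a k * a (k+1) := chainD_succ a k
    constructor
    · show 1 ≤ (chainD a (k+1) : ℤ) - chainMu a k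
      have : (chainD a k : ℤ) + 1 ≤ (chainD a (k+1) : ℤ) := by
        rw [hds]; push_cast; nlinarith [Int.ofNat_le.mpr hd, Int.ofNat_le.mpr ha]
      omega
    · show (chainD a (k+1) : ℤ) - chainMu a k ≤ (chainD a (k+1) : ℤ)
      omega

lemma neg_one_pow_sub (m i : ℕ) (h : i ≤ 2*m) : ((-1 : ℤ)) ^ (2*m - i) = (-1) ^ i := by
  have h1 : ((-1:ℤ))^(2*m-i) * (-1)^i = 1 := by
    rw [← pow_add, Nat.sub_add_cancel h]
    exact Even.neg_one_pow ⟨m, by ring⟩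
  have h2 : ((-1:ℤ))^(2*m-i) * ((-1:ℤ))^(2*m-i) = 1 := by
    rw [← pow_add]; exact Even.neg_one_pow ⟨2*m-i, rfl⟩
  calc ((-1:ℤ))^(2*m-i) = ((-1:ℤ))^(2*m-i) * (((-1:ℤ))^(2*m-i) * (-1)^i) := by rw [h1, mul_one]
    _ = (((-1:ℤ))^(2*m-i) * ((-1:ℤ))^(2*m-i)) * (-1)^i := by ring
    _ = (-1)^i := by rw [h2, one_mul]

lemma phi_even (a : ℕ → ℕ) (m : ℕ) :
    chainPhi a (2*m) = ∏ i ∈ Finset.range (2*m + 1),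
      ((1 : RatFunc ℚ) - RatFunc.X ^ (chainD a i)) ^ ((-1 : ℤ) ^ i) := by
  refine Finset.prod_congr rfl fun i hi => ?_
  rw [neg_one_pow_sub m i (Nat.lt_succ_iff.mp (Finset.mem_range.mp hi))]

lemma one_sub_X_pow_ne_zero (d : ℕ) (hd : 1 ≤ d) : (1 : RatFunc ℚ) - RatFunc.X ^ d ≠ 0 := by
  intro h
  have hx : (algebraMap (Polynomial ℚ) (RatFunc ℚ)) (1 - Polynomial.X ^ d) = 0 := by
    rw [map_sub, _root_.map_one, map_pow, RatFunc.algebraMap_X]; exact h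
  have := (map_eq_zero_iff _ (RatFunc.algebraMap_injective ℚ)).mp hx
  have h0 : (1 - Polynomial.X ^ d : Polynomial ℚ).coeff 0 = 1 := by
    simp [Polynomial.coeff_X_pow, (show ¬ (0 = d) by omega)]
  rw [this] at h0
  simp at h0

lemma key_ratfunc (a : ℕ → ℕ) (m : ℕ) (h1 : ∀ i, 1 ≤ i → i ≤ 2*m → 1 ≤ a i) :
    chainPhi a (2*m) *
      (algebraMap (Polynomial ℚ) (RatFunc ℚ))
        (∏ k ∈ Finset.range m, ∑ j ∈ Finset.range (a (2*k+1)), Polynomial.X ^ (j * chainD a (2*k)))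
      = 1 - RatFunc.X ^ (chainD a (2*m)) := by
  induction m with
  | zero =>
    simp [chainPhi, chainD_zero]
  | succ m ih =>
    have h1' : ∀ i, 1 ≤ i → i ≤ 2*m → 1 ≤ a i := fun i hi1 hi2 => h1 i hi1 (by omega)
    have hdpos : 1 ≤ chainD a (2*m) := chainD_pos a (2*m) h1'
    have hdpos' : 1 ≤ chainD a (2*m+1) := chainD_pos a (2*m+1) (fun i hi1 hi2 => h1 i hi1 (by omega))
    have hphi : chainPhi a (2*(m+1)) = chainPhi a (2*m) *
        (((1 : RatFunc ℚ) - RatFunc.X ^ (chainD a (2*m+1)))⁻¹ *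
         ((1 : RatFunc ℚ) - RatFunc.X ^ (chainD a (2*m+2)))) := by
      rw [phi_even a (m+1), phi_even a m]
      have e1 : 2*(m+1) + 1 = (2*m + 1) + 1 + 1 := by ring
      rw [e1, Finset.prod_range_succ, Finset.prod_range_succ]
      have o1 : ((-1:ℤ))^(2*m+1) = -1 := Odd.neg_one_pow ⟨m, by ring⟩
      have o2 : ((-1:ℤ))^(2*m+1+1) = 1 := Even.neg_one_pow ⟨m+1, by ring⟩
      rw [o1, o2, _root_.zpow_neg_one, zpow_one]
      ring
    have hgeom : ((1 : RatFunc ℚ) - RatFunc.X ^ (chainD a (2*m))) *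
        (algebraMap (Polynomial ℚ) (RatFunc ℚ))
          (∑ j ∈ Finset.range (a (2*m+1)), Polynomial.X ^ (j * chainD a (2*m)))
        = 1 - RatFunc.X ^ (chainD a (2*m+1)) := by
      rw [map_sum]
      have hc : ∀ j, (algebraMap (Polynomial ℚ) (RatFunc ℚ)) (Polynomial.X ^ (j * chainD a (2*m)))
          = (RatFunc.X ^ (chainD a (2*m))) ^ j := by
        intro j
        rw [map_pow, RatFunc.algebraMap_X, ← pow_mul, mul_comm]
      simp_rw [hc]
      have := geom_sum_mul (RatFunc.X ^ (chainD a (2*m)) : RatFunc ℚ) (a (2*m+1))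
      have e2 : chainD a (2*m+1) = chainD a (2*m) * a (2*m+1) := chainD_succ a (2*m)
      rw [e2, pow_mul]
      linear_combination -this
    rw [Finset.prod_range_succ, _root_.map_mul, hphi]
    have hne : ((1 : RatFunc ℚ) - RatFunc.X ^ (chainD a (2*m+1))) ≠ 0 :=
      one_sub_X_pow_ne_zero _ hdpos'
    calc chainPhi a (2*m) *
          (((1:RatFunc ℚ) - RatFunc.X ^ chainD a (2*m+1))⁻¹ * (1 - RatFunc.X ^ chainD a (2*m+2))) *
          ((algebraMap (Polynomial ℚ) (RatFunc ℚ))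
            (∏ k ∈ Finset.range m, ∑ j ∈ Finset.range (a (2*k+1)), Polynomial.X ^ (j * chainD a (2*k))) *
           (algebraMap (Polynomial ℚ) (RatFunc ℚ))
            (∑ j ∈ Finset.range (a (2*m+1)), Polynomial.X ^ (j * chainD a (2*m))))
        = (chainPhi a (2*m) * (algebraMap (Polynomial ℚ) (RatFunc ℚ))
            (∏ k ∈ Finset.range m, ∑ j ∈ Finset.range (a (2*k+1)), Polynomial.X ^ (j * chainD a (2*k)))) *
          (algebraMap (Polynomial ℚ) (RatFunc ℚ))
            (∑ j ∈ Finset.range (a (2*m+1)), Polynomial.X ^ (j * chainD a (2*m))) *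
          ((1 - RatFunc.X ^ chainD a (2*m+1))⁻¹ * (1 - RatFunc.X ^ chainD a (2*m+2))) := by ring
      _ = (1 - RatFunc.X ^ chainD a (2*m+1)) *
          ((1 - RatFunc.X ^ chainD a (2*m+1))⁻¹ * (1 - RatFunc.X ^ chainD a (2*m+2))) := by
            rw [ih h1', hgeom]
      _ = 1 - RatFunc.X ^ (chainD a (2*(m+1))) := by
            rw [← mul_assoc, mul_inv_cancel₀ hne, one_mul, (by ring : 2*(m+1) = 2*m+2)]

/-- evaluation of a truncated power series at `nilpN μ` -/
noncomputable def evalPS (μ : ℕ) (f : PowerSeries ℚ) : Matrix (Fin μ) (Fin μ) ℚ :=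
  Polynomial.aeval (nilpN μ) (PowerSeries.trunc μ f)

lemma aeval_congr_mod (μ : ℕ) (q₁ q₂ : Polynomial ℚ)
    (h : (Polynomial.X : Polynomial ℚ) ^ μ ∣ q₁ - q₂) :
    Polynomial.aeval (nilpN μ) q₁ = Polynomial.aeval (nilpN μ) q₂ := by
  obtain ⟨r, hr⟩ := h
  have : Polynomial.aeval (nilpN μ) (q₁ - q₂) = 0 := by
    rw [hr, _root_.map_mul, map_pow, Polynomial.aeval_X, nilpN_pow_eq_zero μ μ le_rfl, zero_mul]
  rw [map_sub, sub_eq_zero] at this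
  exact this

lemma aeval_eq_evalPS (μ : ℕ) (q : Polynomial ℚ) :
    Polynomial.aeval (nilpN μ) q = evalPS μ (q : PowerSeries ℚ) := by
  refine (aeval_congr_mod μ q _ ?_).trans rfl
  rw [Polynomial.X_pow_dvd_iff]
  intro d hd
  rw [Polynomial.coeff_sub, PowerSeries.coeff_trunc, if_pos hd, Polynomial.coeff_coe, sub_self]

lemma evalPS_mul (μ : ℕ) (f g : PowerSeries ℚ) :
    evalPS μ (f * g) = evalPS μ f * evalPS μ g := by
  unfold evalPS
  rw [← _root_.map_mul]
  refine aeval_congr_mod μ _ _ ?_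
  rw [Polynomial.X_pow_dvd_iff]
  intro d hd
  rw [Polynomial.coeff_sub, PowerSeries.coeff_trunc, if_pos hd, Polynomial.coeff_mul,
    PowerSeries.coeff_mul]
  rw [sub_eq_zero]
  refine Finset.sum_congr rfl fun x hx => ?_
  have hxd := Finset.HasAntidiagonal.mem_antidiagonal.mp hx
  have hx1 : x.1 < μ := by omega
  have hx2 : x.2 < μ := by omega
  rw [PowerSeries.coeff_trunc, PowerSeries.coeff_trunc, if_pos hx1, if_pos hx2]

lemma evalPS_one (μ : ℕ) (hμ : 1 ≤ μ) : evalPS μ 1 = 1 := by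
  obtain ⟨μ', rfl⟩ := Nat.exists_eq_add_of_le hμ
  unfold evalPS
  rw [show 1 + μ' = μ' + 1 by omega, PowerSeries.trunc_one, _root_.map_one]

lemma evalPS_eq_chiMat (μ : ℕ) (hμ : 1 ≤ μ) (f : PowerSeries ℚ) (c : ℕ → ℚ)
    (hc : ∀ i, c i = PowerSeries.coeff i f) :
    evalPS μ f = chiMat μ c := by
  obtain ⟨μ', rfl⟩ := Nat.exists_eq_add_of_le hμ
  unfold evalPS chiMat
  rw [show 1 + μ' = μ' + 1 by omega]
  rw [Polynomial.aeval_eq_sum_range' (PowerSeries.natDegree_trunc_lt f μ')]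
  refine Finset.sum_congr rfl fun i hi => ?_
  rw [PowerSeries.coeff_trunc, if_pos (Finset.mem_range.mp hi), hc]

lemma list_aeval_prod (μ m : ℕ) (f : ℕ → Polynomial ℚ) :
    ((List.range m).map (fun k => Polynomial.aeval (nilpN μ) (f k))).prod
      = Polynomial.aeval (nilpN μ) (∏ k ∈ Finset.range m, f k) := by
  induction m with
  | zero => simp
  | succ m ih =>
    rw [List.range_succ, List.map_append, List.prod_append, Finset.prod_range_succ,
      _root_.map_mul, ih]
    simp

/-- for `n = 2m`, `m ≥ 1`:
`∏_{k=1}^{m} (∑_{j=0}^{a_{2k−1}−1} N^{j·d_{2k−2}}) = χ_{2m}`; equivalently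
`φ_{2m}(N) · ∏_{k=1}^{m} (∑_{j=0}^{a_{2k−1}−1} N^{j·d_{2k−2}}) = 𝟏`.
(The product over `k = 1, …, m` is reindexed as `k = 0, …, m−1`, taken as an ordered
list product since matrices a priori need not commute.) -/
theorem stmt_9 (m : ℕ) (hm : 1 ≤ m) (n : ℕ) (hn : n = 2 * m)
    (a : ℕ → ℕ) (ha : ∀ i, 1 ≤ i → i ≤ n → 2 ≤ a i)
    (p : Polynomial ℚ)
    (hp : algebraMap (Polynomial ℚ) (RatFunc ℚ) p = chainPhi a n)
    (c : ℕ → ℚ)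
    (hc : ∀ i, c i = PowerSeries.coeff i ((p : PowerSeries ℚ)⁻¹)) :
    ((List.range m).map (fun k =>
        ∑ j ∈ Finset.range (a (2 * k + 1)),
          (nilpN (chainMu a n).toNat) ^ (j * chainD a (2 * k)))).prod
      = chiMat (chainMu a n).toNat c ∧
    Polynomial.aeval (nilpN (chainMu a n).toNat) p *
        ((List.range m).map (fun k =>
          ∑ j ∈ Finset.range (a (2 * k + 1)),
            (nilpN (chainMu a n).toNat) ^ (j * chainD a (2 * k)))).prod
      = 1 := by
  set μ := (chainMu a n).toNat with hμdef
  set N := nilpN μ with hNdef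
  -- bounds on μ
  obtain ⟨hmu1, hmu2⟩ := chainMu_bounds a n ha
  have hμ1 : 1 ≤ μ := by omega
  have hμd : μ ≤ chainD a n := by
    have : ((chainMu a n).toNat : ℤ) ≤ (chainD a n : ℤ) := by
      rw [Int.toNat_of_nonneg (by omega)]; exact hmu2
    exact_mod_cast this
  -- polynomial identity
  set G : Polynomial ℚ :=
    ∏ k ∈ Finset.range m, ∑ j ∈ Finset.range (a (2*k+1)), Polynomial.X ^ (j * chainD a (2*k))
    with hGdef
  have h1 : ∀ i, 1 ≤ i → i ≤ 2*m → 1 ≤ a i := fun i hi1 hi2 =>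
    le_trans one_le_two (ha i hi1 (by omega))
  have hkey : algebraMap (Polynomial ℚ) (RatFunc ℚ) (p * G)
      = algebraMap (Polynomial ℚ) (RatFunc ℚ) (1 - Polynomial.X ^ (chainD a n)) := by
    rw [_root_.map_mul, hp, map_sub, _root_.map_one, map_pow, RatFunc.algebraMap_X, hn]
    exact key_ratfunc a m h1
  have hpG : p * G = 1 - Polynomial.X ^ (chainD a n) :=
    RatFunc.algebraMap_injective ℚ hkey
  -- constant coefficient of p
  have hdn : 1 ≤ chainD a n := chainD_pos a n
    (fun i hi1 hi2 => le_trans one_le_two (ha i hi1 hi2))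
  have hp0G0 : p.coeff 0 * G.coeff 0 = 1 := by
    rw [← Polynomial.mul_coeff_zero, hpG]
    simp [Polynomial.coeff_X_pow, (show ¬ (0 = chainD a n) by omega)]
  have hp0 : p.coeff 0 ≠ 0 := left_ne_zero_of_mul (hp0G0 ▸ one_ne_zero)
  have hconst : (PowerSeries.constantCoeff) (p : PowerSeries ℚ) ≠ 0 := by
    rwa [← PowerSeries.coeff_zero_eq_constantCoeff, Polynomial.coeff_coe]
  have hinv : (p : PowerSeries ℚ) * (p : PowerSeries ℚ)⁻¹ = 1 :=
    PowerSeries.mul_inv_cancel _ hconst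
  -- the matrix list product equals aeval N G
  have hterm : ∀ k, (∑ j ∈ Finset.range (a (2*k+1)), N ^ (j * chainD a (2*k)))
      = Polynomial.aeval N (∑ j ∈ Finset.range (a (2*k+1)), (Polynomial.X : Polynomial ℚ) ^ (j * chainD a (2*k))) := by
    intro k
    simp only [map_sum, map_pow, Polynomial.aeval_X]
  have hlist : ((List.range m).map (fun k =>
        ∑ j ∈ Finset.range (a (2 * k + 1)), N ^ (j * chainD a (2 * k)))).prod
      = Polynomial.aeval N G := by
    calc ((List.range m).map (fun k =>
          ∑ j ∈ Finset.range (a (2 * k + 1)), N ^ (j * chainD a (2 * k)))).prod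
        = ((List.range m).map (fun k => Polynomial.aeval N
            (∑ j ∈ Finset.range (a (2*k+1)), (Polynomial.X : Polynomial ℚ) ^ (j * chainD a (2*k))))).prod := by
          congr 1
          exact List.map_congr_left fun k _ => hterm k
      _ = Polynomial.aeval N G := list_aeval_prod μ m _
  -- second part
  have hsecond : Polynomial.aeval N p *
      ((List.range m).map (fun k =>
        ∑ j ∈ Finset.range (a (2 * k + 1)), N ^ (j * chainD a (2 * k)))).prod = 1 := by
    rw [hlist, ← _root_.map_mul, hpG, map_sub, _root_.map_one, map_pow, Polynomial.aeval_X,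
      nilpN_pow_eq_zero μ _ hμd, sub_zero]
  refine ⟨?_, hsecond⟩
  -- first part
  have hPinv : evalPS μ ((p : PowerSeries ℚ)) * evalPS μ ((p : PowerSeries ℚ)⁻¹) = 1 := by
    rw [← evalPS_mul, hinv, evalPS_one μ hμ1]
  have hAP : Polynomial.aeval N G * Polynomial.aeval N p
      = Polynomial.aeval N p * Polynomial.aeval N G := by
    rw [← _root_.map_mul, ← _root_.map_mul, mul_comm]
  have hchi : evalPS μ ((p : PowerSeries ℚ)⁻¹) = chiMat μ c :=
    evalPS_eq_chiMat μ hμ1 _ c hc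
  rw [hlist]
  calc Polynomial.aeval N G
      = Polynomial.aeval N G *
        (evalPS μ ((p : PowerSeries ℚ)) * evalPS μ ((p : PowerSeries ℚ)⁻¹)) := by
        rw [hPinv, mul_one]
    _ = (Polynomial.aeval N G * Polynomial.aeval N p) * evalPS μ ((p : PowerSeries ℚ)⁻¹) := by
        rw [aeval_eq_evalPS μ p, mul_assoc]
    _ = (Polynomial.aeval N p * Polynomial.aeval N G) * evalPS μ ((p : PowerSeries ℚ)⁻¹) := by
        rw [hAP]
    _ = chiMat μ c := by
        rw [← hlist, hsecond, one_mul, hchi]
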